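/- Let r ≥ 2 and let a_1,…,a_r be strictly positive real numbers. Then the map from V := {x ∈ ℝ^r : x_1 + ⋯ + x_r = 0} to ℝ^r sending x to Σ_{j=1}^r a_j e^{⟨v_j,x⟩} v_j is injective on V. -/

import Mathlib

open scoped RealInnerProductSpace

/-- The standard basis `u_1, …, u_r` of `ℝ^r`. -/
noncomputable def stdU {r : ℕ} (j : Fin r) : EuclideanSpace ℝ (Fin r) :=
  EuclideanSpace.single j 1

/-- The vectors `v_j = u_{j+1} - u_j` (`j = 1, …, r-1`), `v_r = u_1 - u_r`. -/
noncomputable def stdV {r : ℕ} (j : Fin r) : EuclideanSpace ℝ (Fin r) :=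
  stdU (⟨(j.val + 1) % r, Nat.mod_lt _ j.pos⟩ : Fin r) - stdU j

lemma inner_stdV {r : ℕ} (j : Fin r) (x : EuclideanSpace ℝ (Fin r)) :
    ⟪stdV j, x⟫ = x ⟨(j.val + 1) % r, Nat.mod_lt _ j.pos⟩ - x j := by
  simp [stdV, stdU, inner_sub_left, EuclideanSpace.inner_single_left]

lemma exp_term_nonneg (s t : ℝ) : 0 ≤ (Real.exp s - Real.exp t) * (s - t) := by
  rcases le_total s t with h | h
  · have := Real.exp_le_exp.2 h; nlinarith
  · have := Real.exp_le_exp.2 h; nlinarith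

lemma exp_term_eq (s t : ℝ) (h : (Real.exp s - Real.exp t) * (s - t) = 0) : s = t := by
  by_contra hne
  rcases lt_or_gt_of_ne hne with hlt | hlt
  · have := Real.exp_lt_exp.2 hlt; nlinarith
  · have := Real.exp_lt_exp.2 hlt; nlinarith

/-- For strictly positive coefficients `a_1, …, a_r`, the map
`x ↦ Σ_j a_j e^{⟨v_j,x⟩} v_j` is injective on `V = {x ∈ ℝ^r : x_1 + ⋯ + x_r = 0}`. -/
theorem injectivity_on_V (r : ℕ) (hr : 2 ≤ r) (a : Fin r → ℝ) (ha : ∀ j, 0 < a j) :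
    Set.InjOn
      (fun x : EuclideanSpace ℝ (Fin r) =>
        ∑ j : Fin r, (a j * Real.exp ⟪stdV j, x⟫) • stdV j)
      {x : EuclideanSpace ℝ (Fin r) | ∑ i : Fin r, x i = 0} := by
  intro x hx y hy h
  have hr0 : 0 < r := lt_of_lt_of_le two_pos hr
  have h' : ∑ j : Fin r, (a j * Real.exp ⟪stdV j, x⟫) • stdV j
      = ∑ j : Fin r, (a j * Real.exp ⟪stdV j, y⟫) • stdV j := h
  have h1 : ⟪∑ j : Fin r, (a j * Real.exp ⟪stdV j, x⟫) • stdV j, x - y⟫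
      = ⟪∑ j : Fin r, (a j * Real.exp ⟪stdV j, y⟫) • stdV j, x - y⟫ := by rw [h']
  rw [sum_inner, sum_inner] at h1
  simp only [real_inner_smul_left, inner_sub_right] at h1
  have hsum0 : ∑ j : Fin r,
      a j * ((Real.exp ⟪stdV j, x⟫ - Real.exp ⟪stdV j, y⟫) * (⟪stdV j, x⟫ - ⟪stdV j, y⟫)) = 0 := by
    have := sub_eq_zero.2 h1
    rw [← Finset.sum_sub_distrib] at this
    rw [← this]
    apply Finset.sum_congr rfl
    intro j _
    ring
  have heach : ∀ j ∈ Finset.univ,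
      a j * ((Real.exp ⟪stdV j, x⟫ - Real.exp ⟪stdV j, y⟫) * (⟪stdV j, x⟫ - ⟪stdV j, y⟫)) = 0 :=
    (Finset.sum_eq_zero_iff_of_nonneg (fun j _ =>
      mul_nonneg (ha j).le (exp_term_nonneg _ _))).1 hsum0
  have heq : ∀ j : Fin r, ⟪stdV j, x⟫ = ⟪stdV j, y⟫ := by
    intro j
    have := heach j (Finset.mem_univ j)
    exact exp_term_eq _ _ ((mul_eq_zero.1 this).resolve_left (ha j).ne')
  set c : Fin r → ℝ := fun i => x i - y i with hc
  have hrel : ∀ j : Fin r, c ⟨(j.val + 1) % r, Nat.mod_lt _ j.pos⟩ = c j := by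
    intro j
    have := heq j
    rw [inner_stdV, inner_stdV] at this
    simp only [hc]
    linarith
  have hconst : ∀ k (hk : k < r), c ⟨k, hk⟩ = c ⟨0, hr0⟩ := by
    intro k
    induction k with
    | zero => intro hk; rfl
    | succ k ih =>
      intro hk
      have hk' : k < r := Nat.lt_of_succ_lt hk
      have h2 := hrel ⟨k, hk'⟩
      have hmod : (k + 1) % r = k + 1 := Nat.mod_eq_of_lt hk
      rw [← ih hk', ← h2]
      exact congrArg c (Fin.ext hmod.symm)
  have hsumc : ∑ i : Fin r, c i = 0 := by
    simp only [hc]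
    rw [Finset.sum_sub_distrib, hx, hy, sub_zero]
  have hsumc' : ∑ i : Fin r, c i = r * c ⟨0, hr0⟩ := by
    rw [Finset.sum_congr rfl (fun i _ => by
      have := hconst i.val i.isLt
      simpa using this)]
    simp [mul_comm]
  have hc0 : c ⟨0, hr0⟩ = 0 := by
    have : (r : ℝ) ≠ 0 := Nat.cast_ne_zero.2 hr0.ne'
    rw [hsumc] at hsumc'
    exact (mul_eq_zero.1 hsumc'.symm).resolve_left this
  have hci : ∀ i : Fin r, c i = 0 := by
    intro i
    have := hconst i.val i.isLt
    simpa [hc0] using this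
  ext i
  have := hci i
  simp only [hc] at this
  linarith
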